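/- If the random exchange process is transient (prod_{k=0}^infty P(eta_1 <= x_0+k) = 0 fails, with sum S = sum_{j=1}^infty prod_{k=0}^{j-1} P(eta_1 <= x_0+k) < infinity), then for x in (x_0+n, x_0+n+1], the probability of never returning below x_0 is P_x(T^{(R)}_{x_0} = infinity) = (1 + sum_{j=1}^{n} prod_{k=0}^{j-1} P(eta_1 <= x_0+k)) / (1 + S). -/

import Mathlib

open MeasureTheory Filter ProbabilityTheory
open scoped ENNReal

set_option linter.unusedSectionVars false
set_option maxHeartbeats 1000000

namespace Stmt12Aux

variable {Ω : Type*} [MeasurableSpace Ω]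

def D (eta : ℕ → Ω → ℝ) (x0 : ℝ) (m ℓ : ℕ) : Set Ω :=
  {ω | ∀ i, i < ℓ → eta (m + i) ω ≤ x0 + ℓ - 1 - i}

def A (eta : ℕ → Ω → ℝ) (x0 : ℝ) (m : ℕ) : Set Ω :=
  ⋂ ℓ : ℕ, (D eta x0 m (ℓ + 1))ᶜ

def U (eta : ℕ → Ω → ℝ) (x0 : ℝ) (m : ℕ) : Set Ω :=
  D eta x0 0 m ∩ A eta x0 m

def Dset (x0 : ℝ) (ℓ : ℕ) : Set (ℕ → ℝ) := {f | ∀ i, i < ℓ → f i ≤ x0 + ℓ - 1 - i}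

def Aset (x0 : ℝ) : Set (ℕ → ℝ) := ⋂ ℓ : ℕ, (Dset x0 (ℓ + 1))ᶜ

lemma D_eq_iInter (eta : ℕ → Ω → ℝ) (x0 : ℝ) (m ℓ : ℕ) :
    D eta x0 m ℓ = ⋂ (i : ℕ) (_ : i < ℓ), eta (m + i) ⁻¹' Set.Iic (x0 + ℓ - 1 - i) := by
  ext ω; simp [D, Set.mem_iInter]

lemma subset_D (eta : ℕ → Ω → ℝ) (x0 : ℝ) (m ℓ : ℕ) :
    D eta x0 0 (m + ℓ) ⊆ D eta x0 m ℓ := by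
  intro ω h i hi
  have h2 := h (m + i) (by omega)
  rw [zero_add] at h2
  push_cast at h2 ⊢
  linarith

lemma D_trans (eta : ℕ → Ω → ℝ) (x0 : ℝ) (m ℓ : ℕ) {ω : Ω}
    (h1 : ω ∈ D eta x0 0 m) (h2 : ω ∈ D eta x0 m ℓ) : ω ∈ D eta x0 0 (m + ℓ) := by
  intro j hj
  rw [zero_add]
  by_cases hjm : j < m
  · have := h1 j hjm
    rw [zero_add] at this
    push_cast at this ⊢
    linarith
  · have hle : m ≤ j := by omega
    have := h2 (j - m) (by omega)
    rw [Nat.add_sub_cancel' hle] at this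
    have hc : ((j - m : ℕ) : ℝ) = (j : ℝ) - (m : ℝ) := by push_cast [Nat.cast_sub hle]; ring
    rw [hc] at this
    push_cast at this ⊢
    linarith

lemma measD_side (eta : ℕ → Ω → ℝ) (x0 : ℝ) (m ℓ : ℕ) (M : MeasurableSpace Ω)
    (hle : ∀ i, i < ℓ → MeasurableSpace.comap (eta (m + i)) inferInstance ≤ M) :
    MeasurableSet[M] (D eta x0 m ℓ) := by
  rw [D_eq_iInter]
  exact MeasurableSet.iInter fun i => MeasurableSet.iInter fun hi =>
    hle i hi _ ⟨Set.Iic _, measurableSet_Iic, rfl⟩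

lemma measurableSet_D (eta : ℕ → Ω → ℝ) (hmeas : ∀ n, Measurable (eta n)) (x0 : ℝ) (m ℓ : ℕ) :
    MeasurableSet (D eta x0 m ℓ) :=
  measD_side eta x0 m ℓ _ (fun i _ => (hmeas (m + i)).comap_le)

lemma measurableSet_A (eta : ℕ → Ω → ℝ) (hmeas : ∀ n, Measurable (eta n)) (x0 : ℝ) (m : ℕ) :
    MeasurableSet (A eta x0 m) :=
  MeasurableSet.iInter fun ℓ => (measurableSet_D eta hmeas x0 m (ℓ + 1)).compl

lemma measurableSet_U (eta : ℕ → Ω → ℝ) (hmeas : ∀ n, Measurable (eta n)) (x0 : ℝ) (m : ℕ) :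
    MeasurableSet (U eta x0 m) :=
  (measurableSet_D eta hmeas x0 0 m).inter (measurableSet_A eta hmeas x0 m)

lemma measD (μ : Measure Ω) (eta : ℕ → Ω → ℝ) (x0 : ℝ)
    (hindep : iIndepFun eta μ)
    (hident : ∀ n, IdentDistrib (eta n) (eta 0) μ μ) (m ℓ : ℕ) :
    μ (D eta x0 m ℓ) = ∏ k ∈ Finset.range ℓ, μ {ω | eta 0 ω ≤ x0 + (k : ℝ)} := by
  classical
  have hset : D eta x0 m ℓ
      = ⋂ j ∈ Finset.Ico m (m + ℓ), eta j ⁻¹' Set.Iic (x0 + ((m : ℝ) + (ℓ : ℝ)) - 1 - (j : ℝ)) := by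
    ext ω
    simp only [D, Set.mem_setOf_eq, Set.mem_iInter, Finset.mem_Ico, Set.mem_preimage,
      Set.mem_Iic]
    constructor
    · rintro h j ⟨hj1, hj2⟩
      have h2 := h (j - m) (by omega)
      rw [Nat.add_sub_cancel' hj1] at h2
      have hc : ((j - m : ℕ) : ℝ) = (j : ℝ) - (m : ℝ) := by push_cast [Nat.cast_sub hj1]; ring
      rw [hc] at h2
      linarith
    · intro h i hi
      have h2 := h (m + i) ⟨by omega, by omega⟩
      push_cast at h2 ⊢
      linarith
  rw [hset, hindep.measure_inter_preimage_eq_mul (Finset.Ico m (m + ℓ))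
      (fun j _ => measurableSet_Iic), Finset.prod_Ico_eq_prod_range]
  rw [Nat.add_sub_cancel_left]
  rw [← Finset.prod_range_reflect (fun k => μ {ω | eta 0 ω ≤ x0 + (k : ℝ)}) ℓ]
  refine Finset.prod_congr rfl fun i hi => ?_
  rw [Finset.mem_range] at hi
  have hc : x0 + ((m : ℝ) + (ℓ : ℝ)) - 1 - ((m + i : ℕ) : ℝ) = x0 + ((ℓ - 1 - i : ℕ) : ℝ) := by
    have h1 : 1 + i ≤ ℓ := by omega
    rw [Nat.sub_sub, Nat.cast_sub h1]
    push_cast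
    ring
  rw [hc, (hident (m + i)).measure_mem_eq measurableSet_Iic]
  rfl

lemma jointLaw (μ : Measure Ω) [IsProbabilityMeasure μ] (eta : ℕ → Ω → ℝ)
    (hmeas : ∀ n, Measurable (eta n))
    (hindep : iIndepFun eta μ)
    (hident : ∀ n, IdentDistrib (eta n) (eta 0) μ μ) (t : Finset ℕ) (m : ℕ) :
    Measure.map (fun ω (j : t) => eta (m + (j : ℕ)) ω) μ
      = Measure.pi (fun _ : t => Measure.map (eta 0) μ) := by
  classical
  haveI : IsProbabilityMeasure (Measure.map (eta 0) μ) :=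
    Measure.isProbabilityMeasure_map (hmeas 0).aemeasurable
  refine (Measure.pi_eq fun s hs => ?_).symm
  have hΦ : Measurable (fun ω (j : t) => eta (m + (j : ℕ)) ω) :=
    measurable_pi_lambda _ (fun j => hmeas _)
  rw [Measure.map_apply hΦ (MeasurableSet.univ_pi hs)]
  set sets : ℕ → Set ℝ := fun k =>
    if h : k - m ∈ t ∧ m ≤ k then s ⟨k - m, h.1⟩ else Set.univ with hsets
  have hkey : ∀ j : t, sets (m + (j : ℕ)) = s j := by
    rintro ⟨jv, hj⟩
    simp only [hsets, Nat.add_sub_cancel_left]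
    rw [dif_pos ⟨hj, Nat.le_add_right m jv⟩]
  have h1 : (fun ω (j : t) => eta (m + (j : ℕ)) ω) ⁻¹' Set.pi Set.univ s
      = ⋂ k ∈ Finset.image (fun j => m + j) t, eta k ⁻¹' sets k := by
    ext ω
    simp only [Set.mem_preimage, Set.mem_pi, Set.mem_univ, true_implies, Set.mem_iInter,
      Finset.mem_image, forall_exists_index, and_imp]
    constructor
    · rintro h k j hj rfl
      have := h ⟨j, hj⟩
      rwa [← hkey ⟨j, hj⟩] at this
    · rintro h ⟨jv, hj⟩
      have := h (m + jv) jv hj rfl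
      rwa [hkey ⟨jv, hj⟩] at this
  have hsetsmeas : ∀ k, MeasurableSet (sets k) := by
    intro k
    simp only [hsets]
    split
    · exact hs _
    · exact MeasurableSet.univ
  rw [h1, hindep.measure_inter_preimage_eq_mul _ (fun k _ => hsetsmeas k)]
  rw [Finset.prod_image (fun a _ b _ h => by omega)]
  rw [← Finset.prod_attach t (fun k => μ (eta (m + k) ⁻¹' sets (m + k)))]
  refine Finset.prod_congr rfl fun j _ => ?_
  rw [hkey j, (hident (m + (j : ℕ))).measure_mem_eq (hs j),
    Measure.map_apply (hmeas 0) (hs j)]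

lemma measurable_Dset (x0 : ℝ) (ℓ : ℕ) : MeasurableSet (Dset x0 ℓ) := by
  have : Dset x0 ℓ = ⋂ (i : ℕ) (_ : i < ℓ), (fun f : ℕ → ℝ => f i) ⁻¹' Set.Iic (x0 + ℓ - 1 - i) := by
    ext f; simp [Dset]
  rw [this]
  exact MeasurableSet.iInter fun i => MeasurableSet.iInter fun _ =>
    (measurable_pi_apply i) measurableSet_Iic

lemma measurable_Aset (x0 : ℝ) : MeasurableSet (Aset x0) :=
  MeasurableSet.iInter fun ℓ => (measurable_Dset x0 (ℓ + 1)).compl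

lemma preimage_Aset (eta : ℕ → Ω → ℝ) (x0 : ℝ) (m : ℕ) :
    (fun ω (i : ℕ) => eta (m + i) ω) ⁻¹' Aset x0 = A eta x0 m := by
  ext ω
  simp only [Aset, A, Set.preimage_iInter, Set.preimage_compl, Set.mem_iInter, Set.mem_compl_iff]
  rfl

lemma mapShift (μ : Measure Ω) [IsProbabilityMeasure μ] (eta : ℕ → Ω → ℝ)
    (hmeas : ∀ n, Measurable (eta n))
    (hindep : iIndepFun eta μ)
    (hident : ∀ n, IdentDistrib (eta n) (eta 0) μ μ) (m : ℕ) :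
    Measure.map (fun ω (i : ℕ) => eta (m + i) ω) μ
      = Measure.map (fun ω (i : ℕ) => eta (0 + i) ω) μ := by
  have hΦ : ∀ m : ℕ, Measurable (fun ω (i : ℕ) => eta (m + i) ω) :=
    fun m => measurable_pi_lambda _ fun i => hmeas _
  haveI : IsProbabilityMeasure (Measure.map (fun ω (i : ℕ) => eta (m + i) ω) μ) :=
    Measure.isProbabilityMeasure_map (hΦ m).aemeasurable
  haveI : IsProbabilityMeasure (Measure.map (fun ω (i : ℕ) => eta (0 + i) ω) μ) :=
    Measure.isProbabilityMeasure_map (hΦ 0).aemeasurable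
  refine ext_of_generate_finite (measurableCylinders (fun _ : ℕ => ℝ))
    generateFrom_measurableCylinders.symm isPiSystem_measurableCylinders (fun s hs => ?_)
    (by simp only [measure_univ])
  obtain ⟨t, S, hS, rfl⟩ := (mem_measurableCylinders s).mp hs
  rw [Measure.map_apply (hΦ m) hS.cylinder, Measure.map_apply (hΦ 0) hS.cylinder]
  have e1 : ∀ m : ℕ, (fun ω (i : ℕ) => eta (m + i) ω) ⁻¹' cylinder t S
      = (fun ω (j : t) => eta (m + (j : ℕ)) ω) ⁻¹' S := fun _ => rfl
  have hmeas2 : ∀ m : ℕ, Measurable (fun ω (j : t) => eta (m + (j : ℕ)) ω) :=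
    fun m => measurable_pi_lambda _ fun j => hmeas _
  rw [e1 m, e1 0, ← Measure.map_apply (hmeas2 m) hS, ← Measure.map_apply (hmeas2 0) hS,
    jointLaw μ eta hmeas hindep hident t m, jointLaw μ eta hmeas hindep hident t 0]

lemma measA (μ : Measure Ω) [IsProbabilityMeasure μ] (eta : ℕ → Ω → ℝ)
    (hmeas : ∀ n, Measurable (eta n))
    (hindep : iIndepFun eta μ)
    (hident : ∀ n, IdentDistrib (eta n) (eta 0) μ μ) (x0 : ℝ) (m : ℕ) :
    μ (A eta x0 m) = μ (A eta x0 0) := by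
  have hΦ : ∀ m : ℕ, Measurable (fun ω (i : ℕ) => eta (m + i) ω) :=
    fun m => measurable_pi_lambda _ fun i => hmeas _
  have h0 := preimage_Aset eta x0 0
  rw [← preimage_Aset eta x0 m, ← h0,
    ← Measure.map_apply (hΦ m) (measurable_Aset x0),
    ← Measure.map_apply (hΦ 0) (measurable_Aset x0),
    mapShift μ eta hmeas hindep hident m]

lemma measU (μ : Measure Ω) (eta : ℕ → Ω → ℝ)
    (hmeas : ∀ n, Measurable (eta n))
    (hindep : iIndepFun eta μ) (x0 : ℝ) (m : ℕ) :
    μ (U eta x0 m) = μ (D eta x0 0 m) * μ (A eta x0 m) := by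
  have hIndep : Indep
      (⨆ i ∈ {i : ℕ | i < m}, MeasurableSpace.comap (eta i) inferInstance)
      (⨆ i ∈ {i : ℕ | m ≤ i}, MeasurableSpace.comap (eta i) inferInstance) μ :=
    indep_iSup_of_disjoint (fun i => (hmeas i).comap_le) hindep
      (by rw [Set.disjoint_left]; intro a h1 h2; simp only [Set.mem_setOf_eq] at h1 h2; omega)
  have hD : MeasurableSet[⨆ i ∈ {i : ℕ | i < m}, MeasurableSpace.comap (eta i) inferInstance]
      (D eta x0 0 m) :=
    measD_side eta x0 0 m _ (fun i hi =>
      le_biSup (fun i => MeasurableSpace.comap (eta i) inferInstance)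
        (show (0 + i) ∈ {i : ℕ | i < m} by simp only [Set.mem_setOf_eq]; omega))
  have hA : MeasurableSet[⨆ i ∈ {i : ℕ | m ≤ i}, MeasurableSpace.comap (eta i) inferInstance]
      (A eta x0 m) :=
    MeasurableSet.iInter fun ℓ => (measD_side eta x0 m (ℓ + 1) _ (fun i hi =>
      le_biSup (fun i => MeasurableSpace.comap (eta i) inferInstance)
        (show (m + i) ∈ {i : ℕ | m ≤ i} by simp only [Set.mem_setOf_eq]; omega))).compl
  exact (Indep_iff _ _ _).1 hIndep _ _ hD hA

lemma U_disjoint (eta : ℕ → Ω → ℝ) (x0 : ℝ) :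
    Pairwise (Function.onFun Disjoint (U eta x0)) := by
  have key : ∀ m m' : ℕ, m < m' → Disjoint (U eta x0 m) (U eta x0 m') := by
    intro m m' hlt
    rw [Set.disjoint_left]
    rintro ω ⟨_, hA⟩ ⟨hD', _⟩
    have h1 : ω ∈ D eta x0 m (m' - m) := by
      have : m + (m' - m) = m' := by omega
      exact subset_D eta x0 m (m' - m) (by rw [this]; exact hD')
    have h2 : m' - m = (m' - m - 1) + 1 := by omega
    rw [h2] at h1
    exact (Set.mem_iInter.1 hA (m' - m - 1)) h1
  intro m m' hne
  rcases lt_or_gt_of_ne hne with h | h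
  · exact key m m' h
  · exact (key m' m h).symm

lemma mem_U_of_no_D (eta : ℕ → Ω → ℝ) (x0 : ℝ) (ω : Ω) (N : ℕ)
    (h : ∀ m, N ≤ m → 1 ≤ m → ω ∉ D eta x0 0 m) :
    ∃ m, (m = 0 ∨ (1 ≤ m ∧ m < N)) ∧ ω ∈ U eta x0 m := by
  classical
  have h0 : ω ∈ D eta x0 0 0 := by intro i hi; omega
  set T : Finset ℕ := (Finset.range N).filter (fun m => ω ∈ D eta x0 0 m) with hT
  by_cases hemp : T.Nonempty
  · set m := T.max' hemp with hm
    have hmT : m ∈ T := T.max'_mem hemp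
    simp only [hT, Finset.mem_filter, Finset.mem_range] at hmT
    refine ⟨m, ?_, hmT.2, ?_⟩
    · by_cases hm0 : m = 0
      · exact Or.inl hm0
      · exact Or.inr ⟨by omega, hmT.1⟩
    · simp only [A, Set.mem_iInter, Set.mem_compl_iff]
      intro ℓ hD
      have hbig : ω ∈ D eta x0 0 (m + (ℓ + 1)) := D_trans eta x0 m (ℓ + 1) hmT.2 hD
      by_cases hlt : m + (ℓ + 1) < N
      · have : m + (ℓ + 1) ∈ T := by
          simp only [hT, Finset.mem_filter, Finset.mem_range]
          exact ⟨hlt, hbig⟩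
        have := T.le_max' _ this
        omega
      · exact h (m + (ℓ + 1)) (by omega) (by omega) hbig
  · refine ⟨0, Or.inl rfl, h0, ?_⟩
    simp only [A, Set.mem_iInter, Set.mem_compl_iff]
    intro ℓ hD
    have hbig : ω ∈ D eta x0 0 (ℓ + 1) := by
      have := D_trans eta x0 0 (ℓ + 1) h0 hD
      simpa using this
    by_cases hlt : ℓ + 1 < N
    · exact hemp ⟨ℓ + 1, by simp only [hT, Finset.mem_filter, Finset.mem_range]; exact ⟨hlt, hbig⟩⟩
    · exact h (ℓ + 1) (by omega) (by omega) hbig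

lemma R_le_iff (eta : ℕ → Ω → ℝ) (x : ℝ) (R : ℕ → Ω → ℝ)
    (hR0 : ∀ ω, R 0 ω = x)
    (hRs : ∀ m ω, R (m + 1) ω = max (R m ω - 1) (eta m ω)) (ω : Ω) :
    ∀ m (c : ℝ), R m ω ≤ c ↔ (x - m ≤ c ∧ ∀ j, j < m → eta j ω ≤ c + ((m : ℝ) - 1 - j)) := by
  intro m
  induction m with
  | zero => intro c; simp [hR0 ω]
  | succ m ih =>
    intro c
    rw [hRs m ω, max_le_iff, sub_le_iff_le_add, ih (c + 1)]
    constructor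
    · rintro ⟨⟨h1, h2⟩, h3⟩
      refine ⟨by push_cast; linarith, ?_⟩
      intro j hj
      by_cases hjm : j < m
      · have := h2 j hjm
        push_cast at this ⊢
        linarith
      · have : j = m := by omega
        subst this
        push_cast
        linarith
    · rintro ⟨h1, h2⟩
      refine ⟨⟨by push_cast at h1 ⊢; linarith, ?_⟩, ?_⟩
      · intro j hj
        have := h2 j (by omega)
        push_cast at this ⊢
        linarith
      · have := h2 m (by omega)
        push_cast at this
        linarith

end Stmt12Aux

open Stmt12Aux

theorem stmt_12 {Ω : Type*} [MeasurableSpace Ω] (μ : Measure Ω) [IsProbabilityMeasure μ]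
    (eta : ℕ → Ω → ℝ) (hmeas : ∀ n, Measurable (eta n))
    (hindep : iIndepFun eta μ)
    (hident : ∀ n, IdentDistrib (eta n) (eta 0) μ μ)
    (x0 : ℝ)
    (hP0 : 0 < (μ {ω | eta 0 ω ≤ x0}).toReal)
    (hP1 : (μ {ω | eta 0 ω ≤ x0}).toReal < 1)
    (S : ℝ)
    (hS : HasSum (fun j : ℕ =>
      ∏ k ∈ Finset.range (j + 1), (μ {ω | eta 0 ω ≤ x0 + (k : ℝ)}).toReal) S)
    (n : ℕ) (x : ℝ) (hx : x ∈ Set.Ioc (x0 + n) (x0 + n + 1))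
    (R : ℕ → Ω → ℝ)
    (hR0 : ∀ ω, R 0 ω = x)
    (hRs : ∀ m ω, R (m + 1) ω = max (R m ω - 1) (eta m ω)) :
    (μ {ω | ∀ m, 1 ≤ m → x0 < R m ω}).toReal
      = (1 + ∑ j ∈ Finset.Icc 1 n, ∏ k ∈ Finset.range j,
            (μ {ω | eta 0 ω ≤ x0 + (k : ℝ)}).toReal) / (1 + S) := by
  classical
  set p : ℕ → ℝ := fun k => (μ {ω | eta 0 ω ≤ x0 + (k : ℝ)}).toReal with hp
  set Pi : ℕ → ℝ≥0∞ := fun m => ∏ k ∈ Finset.range m, μ {ω | eta 0 ω ≤ x0 + (k : ℝ)} with hPi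
  have hPiD : ∀ m ℓ, μ (D eta x0 m ℓ) = Pi ℓ := fun m ℓ => measD μ eta x0 hindep hident m ℓ
  have hPifin : ∀ m, Pi m ≠ ⊤ := fun m => (hPiD 0 m) ▸ measure_ne_top μ _
  have hPitoReal : ∀ m, (Pi m).toReal = ∏ k ∈ Finset.range m, p k := fun m =>
    ENNReal.toReal_prod _ _
  have hPiofReal : ∀ m, Pi m = ENNReal.ofReal (∏ k ∈ Finset.range m, p k) := by
    intro m
    rw [← hPitoReal m, ENNReal.ofReal_toReal (hPifin m)]
  have hpnn : ∀ j : ℕ, (0:ℝ) ≤ ∏ k ∈ Finset.range j, p k :=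
    fun j => Finset.prod_nonneg fun k _ => ENNReal.toReal_nonneg
  have hsummable : Summable (fun j : ℕ => ∏ k ∈ Finset.range (j + 1), p k) := ⟨S, hS⟩
  have hSnn : 0 ≤ S := hS.nonneg fun j => hpnn (j + 1)
  -- total sum of Pi
  have htot : ∑' m : ℕ, Pi m = ENNReal.ofReal (1 + S) := by
    rw [tsum_eq_zero_add' ENNReal.summable]
    have h0 : Pi 0 = 1 := by simp [hPi]
    have h1 : ∑' j : ℕ, Pi (j + 1) = ENNReal.ofReal S := by
      have := ENNReal.ofReal_tsum_of_nonneg (fun j => hpnn (j + 1)) hsummable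
      rw [hS.tsum_eq] at this
      rw [this]
      exact tsum_congr fun j => hPiofReal (j + 1)
    rw [h0, h1, ENNReal.ofReal_add zero_le_one hSnn, ENNReal.ofReal_one]
  have htotne : ∑' m : ℕ, Pi m ≠ ⊤ := by rw [htot]; exact ENNReal.ofReal_ne_top
  -- Borel-Cantelli
  have hBC : μ (limsup (fun m => D eta x0 0 m) atTop) = 0 := by
    apply measure_limsup_atTop_eq_zero
    rw [tsum_congr (fun m => hPiD 0 m)]
    exact htotne
  -- cover
  have hcover : Set.univ ⊆ (⋃ m, U eta x0 m) ∪ limsup (fun m => D eta x0 0 m) atTop := by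
    intro ω _
    by_cases hωl : ω ∈ limsup (fun m => D eta x0 0 m) atTop
    · exact Or.inr hωl
    · left
      rw [mem_limsup_iff_frequently_mem, Filter.not_frequently] at hωl
      obtain ⟨N, hN⟩ := Filter.eventually_atTop.1 hωl
      obtain ⟨m, _, hm⟩ := mem_U_of_no_D eta x0 ω N (fun m hNm _ => hN m hNm)
      exact Set.mem_iUnion.2 ⟨m, hm⟩
  -- total mass one
  have hone : ∑' m : ℕ, μ (U eta x0 m) = 1 := by
    rw [← measure_iUnion (U_disjoint eta x0) (fun m => measurableSet_U eta hmeas x0 m)]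
    refine le_antisymm prob_le_one ?_
    calc (1 : ℝ≥0∞) = μ Set.univ := (measure_univ).symm
    _ ≤ μ ((⋃ m, U eta x0 m) ∪ limsup (fun m => D eta x0 0 m) atTop) :=
        measure_mono hcover
    _ ≤ μ (⋃ m, U eta x0 m) + μ (limsup (fun m => D eta x0 0 m) atTop) := measure_union_le _ _
    _ = μ (⋃ m, U eta x0 m) := by rw [hBC, add_zero]
  set a : ℝ≥0∞ := μ (A eta x0 0) with ha
  have hUm : ∀ m, μ (U eta x0 m) = Pi m * a := by
    intro m
    rw [measU μ eta hmeas hindep x0 m, hPiD 0 m, measA μ eta hmeas hindep hident x0 m]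
  have hprodone : ENNReal.ofReal (1 + S) * a = 1 := by
    rw [← htot, ← ENNReal.tsum_mul_right]
    rw [← tsum_congr hUm]
    exact hone
  have hofne : ENNReal.ofReal (1 + S) ≠ 0 :=
    (ENNReal.ofReal_pos.2 (by linarith)).ne'
  have haval : a = (ENNReal.ofReal (1 + S))⁻¹ := by
    rw [← one_mul a, ← ENNReal.inv_mul_cancel hofne ENNReal.ofReal_ne_top, mul_assoc, hprodone,
      mul_one]
  -- target set equality
  have htarget : {ω | ∀ m, 1 ≤ m → x0 < R m ω} = ⋃ m ∈ Finset.range (n + 1), U eta x0 m := by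
    ext ω
    simp only [Set.mem_setOf_eq, Set.mem_iUnion, Finset.mem_range, exists_prop]
    constructor
    · intro hω
      have hnoD : ∀ m, n + 1 ≤ m → 1 ≤ m → ω ∉ D eta x0 0 m := by
        intro m hm h1m hD
        have hcast : (n : ℝ) + 1 ≤ (m : ℝ) := by exact_mod_cast hm
        have hR : R m ω ≤ x0 := by
          rw [R_le_iff eta x R hR0 hRs ω m x0]
          refine ⟨by linarith [hx.2], ?_⟩
          intro j hj
          have := hD j hj
          rw [zero_add] at this
          linarith
        exact absurd (hω m h1m) (not_lt.2 hR)
      obtain ⟨m, hcase, hm⟩ := mem_U_of_no_D eta x0 ω (n + 1) hnoD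
      exact ⟨m, by omega, hm⟩
    · rintro ⟨m, hmn, hD0, hA⟩
      intro m' h1m'
      by_contra hnot
      have hle : R m' ω ≤ x0 := not_lt.1 hnot
      rw [R_le_iff eta x R hR0 hRs ω m' x0] at hle
      obtain ⟨hxc, hjs⟩ := hle
      have hm'n : n < m' := by
        by_contra hcon
        have : (m' : ℝ) ≤ (n : ℝ) := by exact_mod_cast not_lt.1 hcon
        linarith [hx.1]
      have hD' : ω ∈ D eta x0 0 m' := by
        intro i hi
        rw [zero_add]
        have := hjs i hi
        linarith
      have hmm' : m < m' := by omega
      have h1 : ω ∈ D eta x0 m (m' - m) := by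
        have heq : m + (m' - m) = m' := by omega
        exact subset_D eta x0 m (m' - m) (by rw [heq]; exact hD')
      have h2 : m' - m = (m' - m - 1) + 1 := by omega
      rw [h2] at h1
      exact (Set.mem_iInter.1 hA (m' - m - 1)) h1
  -- measure of target
  have hmeast : μ {ω | ∀ m, 1 ≤ m → x0 < R m ω}
      = ∑ m ∈ Finset.range (n + 1), Pi m * a := by
    rw [htarget, measure_biUnion_finset
      ((U_disjoint eta x0).set_pairwise _)
      (fun m _ => measurableSet_U eta hmeas x0 m)]
    exact Finset.sum_congr rfl fun m _ => hUm m
  rw [hmeast]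
  have hane : a ≠ ⊤ := haval ▸ ENNReal.inv_ne_top.2 hofne
  rw [← Finset.sum_mul, ENNReal.toReal_mul]
  have h2 : ((∑ m ∈ Finset.range (n + 1), Pi m).toReal)
      = 1 + ∑ j ∈ Finset.Icc 1 n, ∏ k ∈ Finset.range j, p k := by
    rw [ENNReal.toReal_sum (fun m _ => hPifin m)]
    have hins : Finset.range (n + 1) = insert 0 (Finset.Icc 1 n) := by
      ext i; simp only [Finset.mem_range, Finset.mem_insert, Finset.mem_Icc]; omega
    rw [hins, Finset.sum_insert (by simp)]
    simp only [hPitoReal]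
    simp [hp]
  have h3 : a.toReal = (1 + S)⁻¹ := by
    rw [haval, ENNReal.toReal_inv, ENNReal.toReal_ofReal (by linarith)]
  rw [h2, h3, div_eq_mul_inv]
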